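/- arXiv:1209.1274 — 3 statements merged into one kernel-verified Lean document; each statement's English description precedes it below -/
import Mathlib

section
/- Let Q_1, Q_2, … be i.i.d. random probability measures on ℕ₀ with 0 < m(Q_i) < ∞ a.s., and let f_i(s) = Σ_{k≥0} Q_i(k) s^k denote the (random) probability generating function of Q_i. Then for every 0 ≤ λ ≤ 1 with E[m(Q_1)^λ] < ∞ and every n ≥ 1, E[1 − f_1(f_2(⋯ f_n(0) ⋯))] ≤ (E[m(Q_1)^λ])^n. (Here 1 − f_1(f_2(⋯ f_n(0) ⋯)) is the quenched survival probability P(Z_n > 0 | Q_1, …, Q_n) of a branching process in the random environment (Q_1, Q_2, …) started from one individual, so this states P(Z_n > 0) ≤ E[e^{λX}]^n with X = log m(Q_1).) -/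
open MeasureTheory ProbabilityTheory Finset
open scoped ENNReal

/-- The space `Δ` of probability measures on `ℕ` (represented by `PMF ℕ`) carries the σ-algebra
generated by the evaluation maps `p ↦ p(k)`. -/
noncomputable instance : MeasurableSpace (PMF ℕ) :=
  MeasurableSpace.comap (fun p : PMF ℕ => (p : ℕ → ℝ≥0∞)) inferInstance

/-- The mean `m(p) = Σ_y y p(y)` of a probability measure on `ℕ`. -/
noncomputable def pmfMean (p : PMF ℕ) : ℝ≥0∞ := ∑' y : ℕ, (y : ℝ≥0∞) * p y

/-- The probability generating function `f(s) = Σ_k p(k) s^k`. -/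
noncomputable def pmfPgf (p : PMF ℕ) (s : ℝ) : ℝ := ∑' k : ℕ, (p k).toReal * s ^ k

lemma summable_pmf_toReal (p : PMF ℕ) : Summable fun k => (p k).toReal :=
  ENNReal.summable_toReal (by simp [p.tsum_coe])

lemma tsum_pmf_toReal (p : PMF ℕ) : ∑' k, (p k).toReal = 1 := by
  rw [← ENNReal.tsum_toReal_eq fun k => p.apply_ne_top k, p.tsum_coe, ENNReal.toReal_one]

lemma summable_pgf (p : PMF ℕ) {s : ℝ} (hs0 : 0 ≤ s) (hs1 : s ≤ 1) :
    Summable fun k => (p k).toReal * s ^ k := by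
  refine (summable_pmf_toReal p).of_nonneg_of_le
    (fun k => mul_nonneg ENNReal.toReal_nonneg (pow_nonneg hs0 _)) (fun k => ?_)
  exact mul_le_of_le_one_right ENNReal.toReal_nonneg (pow_le_one₀ hs0 hs1)

lemma pmfPgf_nonneg (p : PMF ℕ) {s : ℝ} (hs : 0 ≤ s) : 0 ≤ pmfPgf p s :=
  tsum_nonneg fun k => mul_nonneg ENNReal.toReal_nonneg (pow_nonneg hs _)

lemma pmfPgf_le_one (p : PMF ℕ) {s : ℝ} (hs0 : 0 ≤ s) (hs1 : s ≤ 1) : pmfPgf p s ≤ 1 := by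
  rw [pmfPgf, ← tsum_pmf_toReal p]
  exact Summable.tsum_le_tsum
    (fun k => mul_le_of_le_one_right ENNReal.toReal_nonneg (pow_le_one₀ hs0 hs1))
    (summable_pgf p hs0 hs1) (summable_pmf_toReal p)

lemma one_sub_pow_le_nat {s : ℝ} (hs0 : 0 ≤ s) (hs1 : s ≤ 1) (k : ℕ) :
    1 - s ^ k ≤ (k : ℝ) * (1 - s) := by
  have hgeo := geom_sum_mul s k
  have hsum : ∑ i ∈ Finset.range k, s ^ i ≤ (k : ℝ) := by
    calc ∑ i ∈ Finset.range k, s ^ i ≤ ∑ _i ∈ Finset.range k, (1 : ℝ) :=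
          Finset.sum_le_sum fun i _ => pow_le_one₀ hs0 hs1
      _ = (k : ℝ) := by simp
  nlinarith [hgeo, hsum]

lemma ofReal_one_sub_pgf_le (p : PMF ℕ) {s : ℝ} (hs0 : 0 ≤ s) (hs1 : s ≤ 1) :
    ENNReal.ofReal (1 - pmfPgf p s) ≤ pmfMean p * ENNReal.ofReal (1 - s) := by
  have hsummable : Summable fun k => (p k).toReal * (1 - s ^ k) := by
    have := (summable_pmf_toReal p).sub (summable_pgf p hs0 hs1)
    refine this.congr fun k => by ring
  have h1 : 1 - pmfPgf p s = ∑' k, (p k).toReal * (1 - s ^ k) := by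
    have : ∑' k, (p k).toReal * (1 - s ^ k)
        = ∑' k, ((p k).toReal - (p k).toReal * s ^ k) := tsum_congr fun k => by ring
    rw [this, Summable.tsum_sub (summable_pmf_toReal p) (summable_pgf p hs0 hs1),
      tsum_pmf_toReal p, pmfPgf]
  rw [h1, ENNReal.ofReal_tsum_of_nonneg
    (fun k => mul_nonneg ENNReal.toReal_nonneg (by nlinarith [pow_le_one₀ hs0 hs1 (n := k)]))
    hsummable]
  calc ∑' k, ENNReal.ofReal ((p k).toReal * (1 - s ^ k))
      ≤ ∑' k : ℕ, p k * ((k : ℝ≥0∞) * ENNReal.ofReal (1 - s)) := by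
        refine ENNReal.tsum_le_tsum fun k => ?_
        rw [ENNReal.ofReal_mul ENNReal.toReal_nonneg, ENNReal.ofReal_toReal (p.apply_ne_top k)]
        refine mul_le_mul_right ?_ _
        calc ENNReal.ofReal (1 - s ^ k) ≤ ENNReal.ofReal ((k : ℝ) * (1 - s)) :=
              ENNReal.ofReal_le_ofReal (one_sub_pow_le_nat hs0 hs1 k)
          _ = (k : ℝ≥0∞) * ENNReal.ofReal (1 - s) := by
              rw [ENNReal.ofReal_mul (Nat.cast_nonneg k), ENNReal.ofReal_natCast]
    _ = pmfMean p * ENNReal.ofReal (1 - s) := by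
        rw [pmfMean, ← ENNReal.tsum_mul_right]
        exact tsum_congr fun k => by ring

lemma foldr_pgf_mem (L : List (PMF ℕ)) :
    0 ≤ L.foldr (fun p acc => pmfPgf p acc) 0 ∧ L.foldr (fun p acc => pmfPgf p acc) 0 ≤ 1 := by
  induction L with
  | nil => norm_num
  | cons p L ih =>
    exact ⟨pmfPgf_nonneg _ ih.1, pmfPgf_le_one _ ih.1 ih.2⟩

lemma foldr_pgf_le_prod (L : List (PMF ℕ)) :
    ENNReal.ofReal (1 - L.foldr (fun p acc => pmfPgf p acc) 0) ≤ (L.map pmfMean).prod := by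
  induction L with
  | nil => simp
  | cons p L ih =>
    simp only [List.foldr_cons, List.map_cons, List.prod_cons]
    calc ENNReal.ofReal (1 - pmfPgf p (L.foldr (fun p acc => pmfPgf p acc) 0))
        ≤ pmfMean p * ENNReal.ofReal (1 - L.foldr (fun p acc => pmfPgf p acc) 0) :=
          ofReal_one_sub_pgf_le p (foldr_pgf_mem L).1 (foldr_pgf_mem L).2
      _ ≤ pmfMean p * (L.map pmfMean).prod := mul_le_mul_right ih _

lemma le_rpow_of_le_of_le_one {x y : ℝ≥0∞} {l : ℝ} (hl0 : 0 ≤ l) (hl1 : l ≤ 1)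
    (hy1 : y ≤ 1) (hyx : y ≤ x) : y ≤ x ^ l := by
  rcases hl0.eq_or_lt with rfl | hl0'
  · simpa using hy1
  rcases le_total x 1 with hx | hx
  · calc y ≤ x := hyx
      _ = x ^ (1 : ℝ) := (ENNReal.rpow_one x).symm
      _ ≤ x ^ l := ENNReal.rpow_le_rpow_of_exponent_ge hx hl1
  · exact hy1.trans (ENNReal.one_le_rpow hx hl0')

lemma measurable_pmfMean : Measurable pmfMean := by
  apply Measurable.ennreal_tsum
  intro y
  exact measurable_const.mul ((measurable_pi_apply y).comp (Measurable.of_comap_le le_rfl))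

lemma list_prod_range {M : Type*} [CommMonoid M] (g : ℕ → M) (n : ℕ) :
    ((List.range n).map g).prod = ∏ i ∈ Finset.range n, g i := by
  induction n with
  | zero => simp
  | succ n ih =>
    rw [List.range_succ, List.map_append, List.prod_append, Finset.prod_range_succ, ih]
    simp

lemma lintegral_prod_of_indep {Ω : Type*} [MeasurableSpace Ω] {P : Measure Ω}
    [IsProbabilityMeasure P] (g : ℕ → Ω → ℝ≥0∞) (hg : ∀ i, Measurable (g i))
    (hind : iIndepFun g P) (s : Finset ℕ) :
    ∫⁻ ω, ∏ i ∈ s, g i ω ∂P = ∏ i ∈ s, ∫⁻ ω, g i ω ∂P := by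
  induction s using Finset.induction with
  | empty => simp
  | @insert i s hi ih =>
    have hindf : IndepFun (g i) (∏ j ∈ s, g j) P :=
      (hind.indepFun_finsetProd_of_notMem hg hi).symm
    have hprodmeas : Measurable fun ω => ∏ j ∈ s, g j ω :=
      Finset.measurable_prod s fun j _ => hg j
    have hfun : (∏ j ∈ s, g j) = fun ω => ∏ j ∈ s, g j ω :=
      funext fun ω => Finset.prod_apply ω s g
    have heq : ∫⁻ ω, g i ω * (∏ j ∈ s, g j) ω ∂P
        = (∫⁻ ω, g i ω ∂P) * ∫⁻ ω, (∏ j ∈ s, g j) ω ∂P := by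
      rw [hfun] at hindf ⊢
      exact lintegral_mul_eq_lintegral_mul_lintegral_of_indepFun'' (hg i).aemeasurable
        hprodmeas.aemeasurable hindf
    simp only [Finset.prod_apply] at heq
    simp only [Finset.prod_insert hi]
    rw [heq, ih]

/-- Let `Q_1, Q_2, …` be i.i.d. random probability measures on `ℕ` with
`0 < m(Q_i) < ∞` a.s., and let `f_i` be the (random) generating function of `Q_i`. Then for
every `0 ≤ λ ≤ 1` with `E[m(Q_1)^λ] < ∞` and every `n ≥ 1`,
`E[1 − f_1(f_2(⋯ f_n(0) ⋯))] ≤ (E[m(Q_1)^λ])^n`;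
the integrand being the quenched survival probability `P(Z_n > 0 | Q_1, …, Q_n)` of a branching
process in the random environment `(Q_1, Q_2, …)` started from one individual. -/
theorem statement1
    {Ω : Type*} [MeasurableSpace Ω] (P : Measure Ω) [IsProbabilityMeasure P]
    (Q : ℕ → Ω → PMF ℕ) (hmeas : ∀ i, Measurable (Q i))
    (hindep : iIndepFun Q P)
    (hident : ∀ i, P.map (Q i) = P.map (Q 1))
    (hm : ∀ i, ∀ᵐ ω ∂P, 0 < pmfMean (Q i ω) ∧ pmfMean (Q i ω) < ⊤)
    (lam : ℝ) (hlam0 : 0 ≤ lam) (hlam1 : lam ≤ 1)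
    (hmom : ∫⁻ ω, pmfMean (Q 1 ω) ^ lam ∂P < ⊤)
    (n : ℕ) (hn : 1 ≤ n) :
    ∫⁻ ω, ENNReal.ofReal
        (1 - (List.range n).foldr (fun i acc => pmfPgf (Q (i + 1) ω) acc) 0) ∂P
      ≤ (∫⁻ ω, pmfMean (Q 1 ω) ^ lam ∂P) ^ n := by
  classical
  set h : PMF ℕ → ℝ≥0∞ := fun p => pmfMean p ^ lam with hh
  have hhm : Measurable h := measurable_pmfMean.pow_const lam
  set g : ℕ → Ω → ℝ≥0∞ := fun i ω => h (Q i ω) with hgdef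
  have hgm : ∀ i, Measurable (g i) := fun i => hhm.comp (hmeas i)
  have hgind : iIndepFun g P :=
    hindep.comp (fun _ => h) (fun _ => hhm)
  have hint : ∀ j, ∫⁻ ω, g j ω ∂P = ∫⁻ ω, pmfMean (Q 1 ω) ^ lam ∂P := fun j => by
    show ∫⁻ ω, h (Q j ω) ∂P = ∫⁻ ω, h (Q 1 ω) ∂P
    rw [← lintegral_map hhm (hmeas j), hident j, lintegral_map hhm (hmeas 1)]
  have hpt : ∀ ω, ENNReal.ofReal
      (1 - (List.range n).foldr (fun i acc => pmfPgf (Q (i + 1) ω) acc) 0)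
      ≤ ∏ i ∈ Finset.range n, g (i + 1) ω := by
    intro ω
    set L := (List.range n).map (fun i => Q (i + 1) ω) with hL
    have hfold : (List.range n).foldr (fun i acc => pmfPgf (Q (i + 1) ω) acc) 0
        = L.foldr (fun p acc => pmfPgf p acc) 0 := by
      rw [hL, List.foldr_map]
    rw [hfold]
    have hb1 : ENNReal.ofReal (1 - L.foldr (fun p acc => pmfPgf p acc) 0) ≤ 1 :=
      ENNReal.ofReal_le_one.mpr (by linarith [(foldr_pgf_mem L).1])
    have hb2 := foldr_pgf_le_prod L
    have hprod : (L.map pmfMean).prod = ∏ i ∈ Finset.range n, pmfMean (Q (i + 1) ω) := by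
      rw [hL, List.map_map, list_prod_range]
      rfl
    rw [hprod] at hb2
    calc ENNReal.ofReal (1 - L.foldr (fun p acc => pmfPgf p acc) 0)
        ≤ (∏ i ∈ Finset.range n, pmfMean (Q (i + 1) ω)) ^ lam :=
          le_rpow_of_le_of_le_one hlam0 hlam1 hb1 hb2
      _ = ∏ i ∈ Finset.range n, pmfMean (Q (i + 1) ω) ^ lam :=
          (ENNReal.prod_rpow_of_nonneg hlam0).symm
      _ = ∏ i ∈ Finset.range n, g (i + 1) ω := rfl
  have hinj : Function.Injective (fun i : ℕ => i + 1) := fun a b hab => by simpa using hab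
  calc ∫⁻ ω, ENNReal.ofReal
        (1 - (List.range n).foldr (fun i acc => pmfPgf (Q (i + 1) ω) acc) 0) ∂P
      ≤ ∫⁻ ω, ∏ i ∈ Finset.range n, g (i + 1) ω ∂P := lintegral_mono hpt
    _ = ∫⁻ ω, ∏ j ∈ (Finset.range n).image (fun i => i + 1), g j ω ∂P := by
        refine lintegral_congr fun ω => ?_
        rw [Finset.prod_image fun a _ b _ hab => hinj hab]
    _ = ∏ j ∈ (Finset.range n).image (fun i => i + 1), ∫⁻ ω, g j ω ∂P :=
        lintegral_prod_of_indep g hgm hgind _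
    _ = ∏ _j ∈ (Finset.range n).image (fun i => i + 1), ∫⁻ ω, pmfMean (Q 1 ω) ^ lam ∂P :=
        Finset.prod_congr rfl fun j _ => hint j
    _ = (∫⁻ ω, pmfMean (Q 1 ω) ^ lam ∂P) ^ n := by
        rw [Finset.prod_const, Finset.card_image_of_injective _ hinj, Finset.card_range]
end

section
/- Let (Z_n) be a branching process in the varying environment (q_1, q_2, …) with Z_0 = 1, and assume each q_i has finite second moment. Then for every n ≥ 1, P(Z_n > 0) ≥ ( e^{−S_n} + Σ_{k=0}^{n−1} η(q_{k+1}) e^{−S_k} )^{−1}. -/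
open MeasureTheory ProbabilityTheory Finset
open scoped ENNReal
set_option maxHeartbeats 1000000

/-- The mean `m(q) = Σ_y y q({y})` of a measure on `ℕ`, as an extended nonnegative real. -/
noncomputable def measMean (q : Measure ℕ) : ℝ≥0∞ := ∑' y : ℕ, (y : ℝ≥0∞) * q {y}

/-- The associated random walk `S_n = Σ_{i=1}^n log m(q_i)` of the environment `(q_1, q_2, …)`. -/
noncomputable def envWalk (q : ℕ → Measure ℕ) (n : ℕ) : ℝ :=
  ∑ i ∈ Finset.range n, Real.log (measMean (q (i + 1))).toReal

/-- The standardized second moment `η(q) = Σ_{y ≥ 1} y² q({y}) / m(q)²`. -/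
noncomputable def measEta (q : Measure ℕ) : ℝ :=
  (∑' y : ℕ, (y : ℝ≥0∞) ^ 2 * q {y}).toReal / (measMean q).toReal ^ 2

/-- For a branching process `(Z_n)` in the varying environment `(q_1, q_2, …)`
with `Z_0 = 1` and offspring laws having finite second moments, for every `n ≥ 1`,
`P(Z_n > 0) ≥ (e^{-S_n} + Σ_{k=0}^{n-1} η(q_{k+1}) e^{-S_k})⁻¹`. -/
theorem statement5
    {Ω : Type*} [MeasurableSpace Ω] (P : Measure Ω) [IsProbabilityMeasure P]
    (q : ℕ → Measure ℕ) [∀ i, IsProbabilityMeasure (q i)]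
    (hm : ∀ i, 0 < measMean (q i) ∧ measMean (q i) < ⊤)
    (hsecond : ∀ i, ∑' y : ℕ, (y : ℝ≥0∞) ^ 2 * q i {y} < ⊤)
    (ξ : ℕ → ℕ → Ω → ℕ) (hmeas : ∀ n j, Measurable (ξ n j))
    (hindep : iIndepFun (fun p : ℕ × ℕ => ξ p.1 p.2) P)
    (hdist : ∀ n j, P.map (ξ n j) = q n)
    (Z : ℕ → Ω → ℕ) (hZ0 : ∀ ω, Z 0 ω = 1)
    (hZrec : ∀ n ω, Z (n + 1) ω = ∑ j ∈ Finset.range (Z n ω), ξ (n + 1) j ω)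
    (n : ℕ) (hn : 1 ≤ n) :
    ENNReal.ofReal
        ((Real.exp (-(envWalk q n)) +
            ∑ k ∈ Finset.range n, measEta (q (k + 1)) * Real.exp (-(envWalk q k)))⁻¹)
      ≤ P {ω | 0 < Z n ω} := by
  classical
  set m : ℕ → ℝ≥0∞ := fun i => measMean (q i) with hm_def
  set s2 : ℕ → ℝ≥0∞ := fun i => ∑' y : ℕ, (y : ℝ≥0∞) ^ 2 * q i {y} with hs2_def
  set μ : ℕ → ℝ≥0∞ := fun k => ∏ i ∈ Finset.range k, measMean (q (i + 1)) with hμ_def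
  have hm0 : ∀ i, m i ≠ 0 := fun i => (hm i).1.ne'
  have hmT : ∀ i, m i ≠ ⊤ := fun i => (hm i).2.ne
  have hs2T : ∀ i, s2 i ≠ ⊤ := fun i => (hsecond i).ne
  have hμ0 : ∀ k, μ k ≠ 0 := fun k =>
    Finset.prod_ne_zero_iff.mpr fun i _ => hm0 (i + 1)
  have hμT : ∀ k, μ k ≠ ⊤ := fun k =>
    (ENNReal.prod_lt_top fun i _ => (hm (i + 1)).2).ne
  -- integrals of functions of ξ
  have hξint : ∀ (N j : ℕ) (g : ℕ → ℝ≥0∞),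
      ∫⁻ ω, g (ξ N j ω) ∂P = ∑' y : ℕ, g y * q N {y} := by
    intro N j g
    rw [← lintegral_map (measurable_of_countable g) (hmeas N j), hdist N j, lintegral_countable']
  have hcast : Measurable fun y : ℕ => (y : ℝ≥0∞) := measurable_of_countable _
  have hξmeas : ∀ N j, Measurable fun ω => (ξ N j ω : ℝ≥0∞) :=
    fun N j => hcast.comp (hmeas N j)
  have hξ1 : ∀ N j, ∫⁻ ω, (ξ N j ω : ℝ≥0∞) ∂P = m N :=
    fun N j => hξint N j fun y => (y : ℝ≥0∞)
  have hξ2 : ∀ N j, ∫⁻ ω, (ξ N j ω : ℝ≥0∞) ^ 2 ∂P = s2 N :=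
    fun N j => hξint N j fun y => (y : ℝ≥0∞) ^ 2
  -- the σ-algebras
  let mΩ : MeasurableSpace Ω := ‹_›
  let cm : ℕ × ℕ → MeasurableSpace Ω := fun p =>
    MeasurableSpace.comap (ξ p.1 p.2) inferInstance
  have hii : iIndep cm P := hindep.iIndep
  let F : ℕ → MeasurableSpace Ω := fun N => ⨆ p ∈ {p : ℕ × ℕ | p.1 ≤ N}, cm p
  let G : ℕ → MeasurableSpace Ω := fun N => ⨆ p ∈ {p : ℕ × ℕ | p.1 = N}, cm p
  have hFle : ∀ N, F N ≤ mΩ :=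
    fun N => iSup₂_le fun p _ => measurable_iff_comap_le.mp (hmeas p.1 p.2)
  have hGle : ∀ N, G N ≤ mΩ :=
    fun N => iSup₂_le fun p _ => measurable_iff_comap_le.mp (hmeas p.1 p.2)
  have hFG : ∀ N, Indep (F N) (G (N + 1)) P := by
    intro N
    refine indep_iSup_of_disjoint (m := cm) (fun p => measurable_iff_comap_le.mp (hmeas p.1 p.2)) hii ?_
    rw [Set.disjoint_left]
    intro p hp hq
    simp only [Set.mem_setOf_eq] at hp hq
    omega
  have hξG : ∀ N j, Measurable[G N] (ξ N j) := by
    intro N j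
    refine measurable_iff_comap_le.mpr ?_
    exact le_iSup₂ (f := fun (p : ℕ × ℕ) (_ : p ∈ {p : ℕ × ℕ | p.1 = N}) => cm p)
      ((N, j) : ℕ × ℕ) rfl
  have hYG : ∀ N z, Measurable[G N] (fun ω => ∑ j ∈ Finset.range z, ξ N j ω) := by
    intro N z
    exact Finset.measurable_sum (Finset.range z) fun j _ => hξG N j
  have hFmono : ∀ {a b : ℕ}, a ≤ b → F a ≤ F b := by
    intro a b hab
    refine iSup₂_le fun p hp => ?_
    exact le_iSup₂ (f := fun (p : ℕ × ℕ) (_ : p ∈ {p : ℕ × ℕ | p.1 ≤ b}) => cm p)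
      p (le_trans hp hab)
  have hGF : ∀ N, G N ≤ F N := by
    intro N
    refine iSup₂_le fun p hp => ?_
    exact le_iSup₂ (f := fun (p : ℕ × ℕ) (_ : p ∈ {p : ℕ × ℕ | p.1 ≤ N}) => cm p)
      p (le_of_eq hp)
  have hZF : ∀ N, Measurable[F N] (Z N) := by
    intro N
    induction N with
    | zero =>
      have h : Z 0 = fun _ => 1 := funext hZ0
      rw [h]; exact measurable_const
    | succ N ih =>
      refine @measurable_to_countable' ℕ Ω _ _ (F (N + 1)) (Z (N + 1)) fun x => ?_
      have hset : Z (N + 1) ⁻¹' {x} = ⋃ z : ℕ,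
          (Z N ⁻¹' {z}) ∩ ((fun ω => ∑ j ∈ Finset.range z, ξ (N + 1) j ω) ⁻¹' {x}) := by
        ext ω
        simp only [Set.mem_preimage, Set.mem_singleton_iff, Set.mem_iUnion, Set.mem_inter_iff]
        constructor
        · intro h; exact ⟨Z N ω, rfl, by rw [← hZrec N ω]; exact h⟩
        · rintro ⟨z, hz, h⟩; rw [hZrec N ω, hz]; exact h
      rw [hset]
      exact MeasurableSet.iUnion fun z =>
        (hFmono (Nat.le_succ N) _ (ih (measurableSet_singleton z))).inter
          (hGF (N + 1) _ (hYG (N + 1) z (measurableSet_singleton x)))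
  have hZmeas : ∀ N, Measurable (Z N) := fun N => (hZF N).mono (hFle N) le_rfl
  -- law of Z N
  have hZint : ∀ (N : ℕ) (g : ℕ → ℝ≥0∞),
      ∫⁻ ω, g (Z N ω) ∂P = ∑' z : ℕ, g z * P (Z N ⁻¹' {z}) := by
    intro N g
    rw [← lintegral_map (measurable_of_countable g) (hZmeas N), lintegral_countable']
    exact tsum_congr fun z => by
      rw [Measure.map_apply (hZmeas N) (measurableSet_singleton z)]
  -- conditioning on Z N
  have hcond : ∀ (N : ℕ) (g : ℕ → ℝ≥0∞),
      ∫⁻ ω, g (Z (N + 1) ω) ∂P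
        = ∑' z : ℕ, P (Z N ⁻¹' {z}) *
            ∫⁻ ω, g (∑ j ∈ Finset.range z, ξ (N + 1) j ω) ∂P := by
    intro N g
    have hmeasA : ∀ z : ℕ, MeasurableSet (Z N ⁻¹' {z}) :=
      fun z => hZmeas N (measurableSet_singleton z)
    have hYmeas : ∀ z : ℕ, Measurable fun ω => g (∑ j ∈ Finset.range z, ξ (N + 1) j ω) :=
      fun z => (measurable_of_countable g).comp ((hYG (N + 1) z).mono (hGle (N + 1)) le_rfl)
    have hpt : ∀ ω, g (Z (N + 1) ω) = ∑' z : ℕ,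
        (Z N ⁻¹' {z}).indicator (fun ω' => g (∑ j ∈ Finset.range z, ξ (N + 1) j ω')) ω := by
      intro ω
      rw [tsum_eq_single (Z N ω) ?_]
      · rw [Set.indicator_of_mem (by exact rfl : ω ∈ Z N ⁻¹' {Z N ω}), hZrec N ω]
      · intro z hz
        exact Set.indicator_of_notMem (by simpa using Ne.symm hz) _
    rw [lintegral_congr hpt,
      lintegral_tsum fun z => ((hYmeas z).indicator (hmeasA z)).aemeasurable]
    refine tsum_congr fun z => ?_
    have hptz : ∀ ω, (Z N ⁻¹' {z}).indicator
          (fun ω' => g (∑ j ∈ Finset.range z, ξ (N + 1) j ω')) ω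
        = (Z N ⁻¹' {z}).indicator (fun _ => (1 : ℝ≥0∞)) ω *
            g (∑ j ∈ Finset.range z, ξ (N + 1) j ω) := by
      intro ω
      by_cases hω : ω ∈ Z N ⁻¹' {z} <;> simp [hω]
    rw [lintegral_congr hptz]
    have hmul := lintegral_mul_eq_lintegral_mul_lintegral_of_independent_measurableSpace
        (μ := P) (hFle N) (hGle (N + 1)) (hFG N)
        (f := fun ω => (Z N ⁻¹' {z}).indicator (fun _ => (1 : ℝ≥0∞)) ω)
        (g := fun ω => g (∑ j ∈ Finset.range z, ξ (N + 1) j ω))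
        (Measurable.indicator measurable_const (hZF N (measurableSet_singleton z)))
        ((measurable_of_countable g).comp (hYG (N + 1) z))
    rw [hmul]
    congr 1
    have h1 : (fun ω => (Z N ⁻¹' {z}).indicator (fun _ => (1 : ℝ≥0∞)) ω)
        = (Z N ⁻¹' {z}).indicator (1 : Ω → ℝ≥0∞) := rfl
    rw [h1, lintegral_indicator_one (hmeasA z)]
  -- first moment of a sum of z offspring
  have hY1 : ∀ N z, ∫⁻ ω, ((∑ j ∈ Finset.range z, ξ N j ω : ℕ) : ℝ≥0∞) ∂P
      = (z : ℝ≥0∞) * m N := by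
    intro N z
    have hpt : ∀ ω, ((∑ j ∈ Finset.range z, ξ N j ω : ℕ) : ℝ≥0∞)
        = ∑ j ∈ Finset.range z, (ξ N j ω : ℝ≥0∞) := fun ω => by push_cast; ring
    rw [lintegral_congr hpt, lintegral_finset_sum _ fun j _ => hξmeas N j]
    simp only [hξ1]
    rw [Finset.sum_const, Finset.card_range, nsmul_eq_mul]
  -- second moment of a sum of z offspring
  have hY2 : ∀ N z, ∫⁻ ω, ((∑ j ∈ Finset.range z, ξ N j ω : ℕ) : ℝ≥0∞) ^ 2 ∂P
      = (z : ℝ≥0∞) * s2 N + (z : ℝ≥0∞) * ((z - 1 : ℕ) : ℝ≥0∞) * m N ^ 2 := by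
    intro N z
    have hpt : ∀ ω, ((∑ j ∈ Finset.range z, ξ N j ω : ℕ) : ℝ≥0∞) ^ 2
        = ∑ j ∈ Finset.range z, ∑ k ∈ Finset.range z,
            (ξ N j ω : ℝ≥0∞) * (ξ N k ω : ℝ≥0∞) := by
      intro ω
      push_cast
      rw [sq, Finset.sum_mul_sum]
    rw [lintegral_congr hpt]
    rw [lintegral_finset_sum _ (f := fun j ω => ∑ k ∈ Finset.range z,
        (ξ N j ω : ℝ≥0∞) * (ξ N k ω : ℝ≥0∞)) fun j _ =>
      Finset.measurable_sum _ fun k _ => (hξmeas N j).mul (hξmeas N k)]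
    have hterm : ∀ j k : ℕ, j ≠ k →
        ∫⁻ ω, (ξ N j ω : ℝ≥0∞) * (ξ N k ω : ℝ≥0∞) ∂P = m N * m N := by
      intro j k hjk
      have hind : IndepFun (ξ N j) (ξ N k) P :=
        hindep.indepFun (show ((N, j) : ℕ × ℕ) ≠ (N, k) by simp [hjk])
      have hind' : IndepFun (fun ω => (ξ N j ω : ℝ≥0∞)) (fun ω => (ξ N k ω : ℝ≥0∞)) P :=
        hind.comp hcast hcast
      rw [lintegral_mul_eq_lintegral_mul_lintegral_of_indepFun'' (hξmeas N j).aemeasurable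
        (hξmeas N k).aemeasurable hind', hξ1, hξ1]
    have hinner : ∀ j ∈ Finset.range z,
        (∫⁻ ω, ∑ k ∈ Finset.range z, (ξ N j ω : ℝ≥0∞) * (ξ N k ω : ℝ≥0∞) ∂P)
          = s2 N + ((z - 1 : ℕ) : ℝ≥0∞) * (m N * m N) := by
      intro j hj
      rw [lintegral_finset_sum _ (f := fun k ω => (ξ N j ω : ℝ≥0∞) * (ξ N k ω : ℝ≥0∞))
        fun k _ => (hξmeas N j).mul (hξmeas N k)]
      rw [← Finset.add_sum_erase _ _ hj]
      congr 1
      · have : ∀ ω, (ξ N j ω : ℝ≥0∞) * (ξ N j ω : ℝ≥0∞) = (ξ N j ω : ℝ≥0∞) ^ 2 :=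
          fun ω => (sq _).symm
        rw [lintegral_congr this, hξ2]
      · rw [Finset.sum_congr rfl fun k hk =>
          hterm j k (Ne.symm (Finset.ne_of_mem_erase hk))]
        rw [Finset.sum_const, Finset.card_erase_of_mem hj, Finset.card_range, nsmul_eq_mul]
    rw [Finset.sum_congr rfl hinner, Finset.sum_const, Finset.card_range, nsmul_eq_mul]
    ring
  -- first moment of Z
  have hμs : ∀ N, μ (N + 1) = μ N * m (N + 1) := fun N => Finset.prod_range_succ _ N
  have hEZ : ∀ N, ∫⁻ ω, (Z N ω : ℝ≥0∞) ∂P = μ N := by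
    intro N
    induction N with
    | zero =>
      have hone : ∀ ω, ((Z 0 ω : ℕ) : ℝ≥0∞) = 1 := fun ω => by rw [hZ0]; norm_num
      rw [lintegral_congr hone, lintegral_one, measure_univ, hμ_def]
      simp
    | succ N ih =>
      rw [hcond N fun y => (y : ℝ≥0∞)]
      have h1 : ∀ z : ℕ, P (Z N ⁻¹' {z}) *
          (∫⁻ ω, ((∑ j ∈ Finset.range z, ξ (N + 1) j ω : ℕ) : ℝ≥0∞) ∂P)
          = m (N + 1) * ((z : ℝ≥0∞) * P (Z N ⁻¹' {z})) := by
        intro z; rw [hY1]; ring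
      rw [tsum_congr h1, ENNReal.tsum_mul_left, ← hZint N fun y => (y : ℝ≥0∞), ih, hμs, mul_comm]
  -- second moment of Z
  set T : ℕ → ℝ≥0∞ := fun N => ∫⁻ ω, (Z N ω : ℝ≥0∞) ^ 2 ∂P with hT_def
  have hTrec : ∀ N, T (N + 1) + m (N + 1) ^ 2 * μ N
      = s2 (N + 1) * μ N + m (N + 1) ^ 2 * T N := by
    intro N
    have h1 : T (N + 1) = ∑' z : ℕ, P (Z N ⁻¹' {z}) *
        ((z : ℝ≥0∞) * s2 (N + 1) + (z : ℝ≥0∞) * ((z - 1 : ℕ) : ℝ≥0∞) * m (N + 1) ^ 2) := by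
      calc T (N + 1) = ∫⁻ ω, ((Z (N + 1) ω : ℕ) : ℝ≥0∞) ^ 2 ∂P := rfl
        _ = ∑' z : ℕ, P (Z N ⁻¹' {z}) *
              ∫⁻ ω, ((∑ j ∈ Finset.range z, ξ (N + 1) j ω : ℕ) : ℝ≥0∞) ^ 2 ∂P :=
            hcond N fun y => (y : ℝ≥0∞) ^ 2
        _ = _ := tsum_congr fun z => by rw [hY2]
    have h2 : μ N = ∑' z : ℕ, (z : ℝ≥0∞) * P (Z N ⁻¹' {z}) := by
      rw [← hZint N fun y => (y : ℝ≥0∞), hEZ]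
    have h3 : T N = ∑' z : ℕ, (z : ℝ≥0∞) ^ 2 * P (Z N ⁻¹' {z}) :=
      hZint N fun y => (y : ℝ≥0∞) ^ 2
    rw [h1, h2, h3, ← ENNReal.tsum_mul_left, ← ENNReal.tsum_mul_left,
      ← ENNReal.tsum_mul_left, ← ENNReal.tsum_add, ← ENNReal.tsum_add]
    refine tsum_congr fun z => ?_
    have hz : (z : ℝ≥0∞) * ((z - 1 : ℕ) : ℝ≥0∞) + (z : ℝ≥0∞) = (z : ℝ≥0∞) ^ 2 := by
      have hnat : z * (z - 1) + z = z ^ 2 := by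
        cases z with
        | zero => rfl
        | succ k => simp [Nat.succ_sub_one]; ring
      calc (z : ℝ≥0∞) * ((z - 1 : ℕ) : ℝ≥0∞) + (z : ℝ≥0∞)
          = ((z * (z - 1) + z : ℕ) : ℝ≥0∞) := by push_cast; ring
        _ = (z : ℝ≥0∞) ^ 2 := by rw [hnat]; push_cast; ring
    calc P (Z N ⁻¹' {z}) *
          ((z : ℝ≥0∞) * s2 (N + 1) + (z : ℝ≥0∞) * ((z - 1 : ℕ) : ℝ≥0∞) * m (N + 1) ^ 2)
          + m (N + 1) ^ 2 * ((z : ℝ≥0∞) * P (Z N ⁻¹' {z}))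
        = (z : ℝ≥0∞) * s2 (N + 1) * P (Z N ⁻¹' {z})
            + ((z : ℝ≥0∞) * ((z - 1 : ℕ) : ℝ≥0∞) + (z : ℝ≥0∞)) * m (N + 1) ^ 2
              * P (Z N ⁻¹' {z}) := by ring
      _ = s2 (N + 1) * ((z : ℝ≥0∞) * P (Z N ⁻¹' {z}))
            + m (N + 1) ^ 2 * ((z : ℝ≥0∞) ^ 2 * P (Z N ⁻¹' {z})) := by rw [hz]; ring
  have hT0 : T 0 = 1 := by simp [hT_def, hZ0]
  have hTfin : ∀ N, T N ≠ ⊤ := by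
    intro N
    induction N with
    | zero => rw [hT0]; exact ENNReal.one_ne_top
    | succ N ih =>
      have hle : T (N + 1) ≤ s2 (N + 1) * μ N + m (N + 1) ^ 2 * T N := by
        rw [← hTrec N]; exact le_self_add
      exact ne_top_of_le_ne_top
        (ENNReal.add_ne_top.mpr ⟨ENNReal.mul_ne_top (hs2T _) (hμT N),
          ENNReal.mul_ne_top (ENNReal.pow_ne_top (hmT _)) ih⟩) hle
  -- the bound on T
  set C : ℕ → ℝ≥0∞ := fun N => (μ N)⁻¹ +
    ∑ k ∈ Finset.range N, s2 (k + 1) * (m (k + 1) ^ 2)⁻¹ * (μ k)⁻¹ with hC_def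
  have sqinv : ∀ x : ℝ≥0∞, x ≠ 0 → x ≠ ⊤ → x ^ 2 * x⁻¹ = x := by
    intro x h0 hT
    rw [sq, mul_assoc, ENNReal.mul_inv_cancel h0 hT, mul_one]
  have hkey : ∀ N, T N ≤ μ N ^ 2 * C N := by
    intro N
    induction N with
    | zero => simp [hT0, hC_def, hμ_def]
    | succ N ih =>
      have hmμT : m (N + 1) ^ 2 * μ N ≠ ⊤ :=
        ENNReal.mul_ne_top (ENNReal.pow_ne_top (hmT _)) (hμT N)
      rw [← ENNReal.add_le_add_iff_right hmμT, hTrec N]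
      calc s2 (N + 1) * μ N + m (N + 1) ^ 2 * T N
          ≤ s2 (N + 1) * μ N + m (N + 1) ^ 2 * (μ N ^ 2 * C N) :=
            add_le_add_right (mul_le_mul_right ih _) _
        _ ≤ μ (N + 1) ^ 2 * C (N + 1) + m (N + 1) ^ 2 * μ N := ?_
      have hEq : μ (N + 1) ^ 2 * C (N + 1) + m (N + 1) ^ 2 * μ N
          = (s2 (N + 1) * μ N + m (N + 1) ^ 2 * (μ N ^ 2 * C N)) + μ (N + 1) := by
        have e1 : μ (N + 1) ^ 2 * (μ (N + 1))⁻¹ = μ (N + 1) :=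
          sqinv _ (hμ0 _) (hμT _)
        have e2 : μ (N + 1) ^ 2 * (s2 (N + 1) * (m (N + 1) ^ 2)⁻¹ * (μ N)⁻¹)
            = s2 (N + 1) * μ N := by
          rw [hμs N, mul_pow]
          calc μ N ^ 2 * m (N + 1) ^ 2 * (s2 (N + 1) * (m (N + 1) ^ 2)⁻¹ * (μ N)⁻¹)
              = s2 (N + 1) * (m (N + 1) ^ 2 * (m (N + 1) ^ 2)⁻¹) * (μ N ^ 2 * (μ N)⁻¹) := by
                ring
            _ = s2 (N + 1) * μ N := by
                rw [ENNReal.mul_inv_cancel (pow_ne_zero 2 (hm0 _)) (ENNReal.pow_ne_top (hmT _)),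
                  sqinv _ (hμ0 N) (hμT N), mul_one]
        have e3 : μ N ^ 2 * (μ N)⁻¹ = μ N := sqinv _ (hμ0 N) (hμT N)
        have hCsucc : C (N + 1) = (μ (N + 1))⁻¹ +
            ((∑ k ∈ Finset.range N, s2 (k + 1) * (m (k + 1) ^ 2)⁻¹ * (μ k)⁻¹)
              + s2 (N + 1) * (m (N + 1) ^ 2)⁻¹ * (μ N)⁻¹) := by
          rw [hC_def]
          simp only []
          rw [Finset.sum_range_succ]
        rw [hCsucc, hC_def]
        simp only []
        rw [mul_add, mul_add, mul_add, e1, e2, e3]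
        have hμm : μ (N + 1) ^ 2 = μ N ^ 2 * m (N + 1) ^ 2 := by rw [hμs N]; ring
        rw [hμm]
        ring
      rw [hEq]
      exact le_self_add
  -- Paley–Zygmund via Cauchy–Schwarz
  set A : Set Ω := {ω | 0 < Z n ω} with hA_def
  have hAmeas : MeasurableSet A := by
    have : A = (Z n) ⁻¹' ({0}ᶜ) := by
      ext ω; simp [hA_def, Nat.pos_iff_ne_zero]
    rw [this]
    exact hZmeas n (measurableSet_singleton 0).compl
  have hPZ : μ n ^ 2 ≤ T n * P A := by
    have hfg : ∀ ω, (Z n ω : ℝ≥0∞)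
        = ((fun ω => (Z n ω : ℝ≥0∞)) * A.indicator fun _ => (1 : ℝ≥0∞)) ω := by
      intro ω
      by_cases h : 0 < Z n ω
      · have : ω ∈ A := h
        simp [Set.indicator_of_mem this]
      · have h0 : Z n ω = 0 := by omega
        simp [h0]
    have hconj : Real.HolderConjugate 2 2 := Real.HolderConjugate.two_two
    have hfmeas : Measurable fun ω => (Z n ω : ℝ≥0∞) := hcast.comp (hZmeas n)
    have hgmeas : Measurable (A.indicator fun _ => (1 : ℝ≥0∞)) :=
      measurable_const.indicator hAmeas
    have hholder := ENNReal.lintegral_mul_le_Lp_mul_Lq P hconj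
      hfmeas.aemeasurable hgmeas.aemeasurable
    have hf2 : (∫⁻ ω, (Z n ω : ℝ≥0∞) ^ (2 : ℝ) ∂P) = T n := by
      rw [hT_def]
      exact lintegral_congr fun ω => by
        rw [← ENNReal.rpow_natCast ((Z n ω : ℝ≥0∞)) 2]; norm_num
    have hg2 : (∫⁻ ω, (A.indicator fun _ => (1 : ℝ≥0∞)) ω ^ (2 : ℝ) ∂P) = P A := by
      have : ∀ ω, (A.indicator fun _ => (1 : ℝ≥0∞)) ω ^ (2 : ℝ)
          = A.indicator (1 : Ω → ℝ≥0∞) ω := by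
        intro ω
        by_cases hω : ω ∈ A <;>
          simp [hω, ENNReal.zero_rpow_of_pos (by norm_num : (0:ℝ) < 2)]
      rw [lintegral_congr this, lintegral_indicator_one hAmeas]
    have hlhs : ∫⁻ ω, ((fun ω => (Z n ω : ℝ≥0∞)) * A.indicator fun _ => (1 : ℝ≥0∞)) ω ∂P
        = μ n := ((lintegral_congr (μ := P) hfg).symm).trans (hEZ n)
    rw [hlhs, hf2, hg2] at hholder
    have hsq := pow_le_pow_left' hholder 2
    have hhalf : ∀ x : ℝ≥0∞, (x ^ ((1:ℝ) / 2)) ^ (2 : ℕ) = x := by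
      intro x
      rw [← ENNReal.rpow_natCast (x ^ ((1:ℝ)/2)) 2, ← ENNReal.rpow_mul]
      norm_num
    calc μ n ^ 2 ≤ ((T n ^ ((1:ℝ)/2)) * (P A ^ ((1:ℝ)/2))) ^ 2 := hsq
      _ = (T n ^ ((1:ℝ)/2)) ^ (2:ℕ) * (P A ^ ((1:ℝ)/2)) ^ (2:ℕ) := by rw [mul_pow]
      _ = T n * P A := by rw [hhalf, hhalf]
  -- conclude
  have hCfin : C n ≠ ⊤ := by
    rw [hC_def]
    refine ENNReal.add_ne_top.mpr ⟨ENNReal.inv_ne_top.mpr (hμ0 n), ?_⟩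
    refine (ENNReal.sum_lt_top.mpr fun k _ => ?_).ne
    refine ENNReal.mul_lt_top (ENNReal.mul_lt_top (hsecond _) ?_) ?_
    · exact ENNReal.inv_lt_top.mpr (pos_iff_ne_zero.mpr (pow_ne_zero 2 (hm0 _)))
    · exact ENNReal.inv_lt_top.mpr (pos_iff_ne_zero.mpr (hμ0 k))
  have hC0 : C n ≠ 0 := by
    have h1 : (0 : ℝ≥0∞) < (μ n)⁻¹ := ENNReal.inv_pos.mpr (hμT n)
    have h2 : (μ n)⁻¹ ≤ C n := by rw [hC_def]; exact le_self_add
    exact (lt_of_lt_of_le h1 h2).ne'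
  have hfinal : (C n)⁻¹ ≤ P A := by
    have h1 : μ n ^ 2 * 1 ≤ μ n ^ 2 * (C n * P A) := by
      calc μ n ^ 2 * 1 = μ n ^ 2 := mul_one _
        _ ≤ T n * P A := hPZ
        _ ≤ μ n ^ 2 * C n * P A := mul_le_mul_left (hkey n) _
        _ = μ n ^ 2 * (C n * P A) := mul_assoc _ _ _
    have h2 : (1 : ℝ≥0∞) ≤ C n * P A :=
      (ENNReal.mul_le_mul_iff_right (pow_ne_zero 2 (hμ0 n)) (ENNReal.pow_ne_top (hμT n))).mp h1
    calc (C n)⁻¹ = (C n)⁻¹ * 1 := (mul_one _).symm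
      _ ≤ (C n)⁻¹ * (C n * P A) := mul_le_mul_right h2 _
      _ = ((C n)⁻¹ * C n) * P A := (mul_assoc _ _ _).symm
      _ = P A := by rw [ENNReal.inv_mul_cancel hC0 hCfin, one_mul]
  -- identify the real expression with (C n).toReal
  have hexp : ∀ k, Real.exp (-(envWalk q k)) = ((μ k)⁻¹).toReal := by
    intro k
    have hpos : ∀ i ∈ Finset.range k, 0 < (measMean (q (i + 1))).toReal :=
      fun i _ => ENNReal.toReal_pos (hm (i + 1)).1.ne' (hm (i + 1)).2.ne
    rw [ENNReal.toReal_inv, hμ_def]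
    rw [envWalk, Real.exp_neg, Real.exp_sum]
    rw [ENNReal.toReal_prod]
    congr 1
    exact Finset.prod_congr rfl fun i hi => Real.exp_log (hpos i hi)
  have heta : ∀ k, measEta (q (k + 1)) = (s2 (k + 1) * (m (k + 1) ^ 2)⁻¹).toReal := by
    intro k
    rw [measEta, ENNReal.toReal_mul, ENNReal.toReal_inv, ENNReal.toReal_pow, div_eq_mul_inv]
  have hRe : Real.exp (-(envWalk q n)) +
      ∑ k ∈ Finset.range n, measEta (q (k + 1)) * Real.exp (-(envWalk q k))
      = (C n).toReal := by
    rw [hC_def]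
    rw [ENNReal.toReal_add (ENNReal.inv_ne_top.mpr (hμ0 n))
      (by
        refine (ENNReal.sum_lt_top.mpr fun k _ => ?_).ne
        refine ENNReal.mul_lt_top (ENNReal.mul_lt_top (hsecond _) ?_) ?_
        · exact ENNReal.inv_lt_top.mpr (pos_iff_ne_zero.mpr (pow_ne_zero 2 (hm0 _)))
        · exact ENNReal.inv_lt_top.mpr (pos_iff_ne_zero.mpr (hμ0 k)))]
    rw [ENNReal.toReal_sum (fun k _ => by
      refine ENNReal.mul_ne_top (ENNReal.mul_ne_top (hs2T _) ?_) ?_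
      · exact ENNReal.inv_ne_top.mpr (pow_ne_zero 2 (hm0 _))
      · exact ENNReal.inv_ne_top.mpr (hμ0 k))]
    rw [hexp n]
    congr 1
    refine Finset.sum_congr rfl fun k _ => ?_
    rw [heta k, hexp k]
    simp [ENNReal.toReal_mul]
  rw [hRe, ← ENNReal.toReal_inv, ENNReal.ofReal_toReal (ENNReal.inv_ne_top.mpr hC0)]
  exact hfinal
end

section
/- Let (Z_n) be a branching process in the varying environment (q_1, q_2, …). Write P_z for the law of the process started from Z_0 = z. Then for all integers z ≥ 1, 0 ≤ v ≤ n and every c > 0, P_z(Z_v > cz, Z_n > 0) ≤ z · P_1(Z_v > c, Z_n > 0) + z · P_1(Z_n > 0) · P_{z−1}(Z_v > (z−1)c). (Either one of the z founding individuals has surviving descendance at time n and more than c descendants at time v, or one has surviving descendance at time n while the other z − 1 together have more than (z−1)c descendants at time v.) -/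
open MeasureTheory ProbabilityTheory Finset
open scoped ENNReal Classical
set_option linter.unusedSectionVars false
set_option maxHeartbeats 1000000

namespace St16


lemma allMeas {δ : Type*} [MeasurableSpace δ] [Countable δ]
    (hsing : ∀ x : δ, MeasurableSet ({x} : Set δ)) (s : Set δ) : MeasurableSet s := by
  rw [← Set.biUnion_of_singleton s]
  exact MeasurableSet.biUnion s.to_countable (fun x _ => hsing x)

lemma allMeasPi {ι : Type*} [Countable ι] {α : ι → Type*} [∀ i, MeasurableSpace (α i)]
    [∀ i, MeasurableSingletonClass (α i)] [Countable (∀ i, α i)]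
    (s : Set (∀ i, α i)) : MeasurableSet s := by
  refine allMeas (fun f => ?_) s
  have : ({f} : Set (∀ i, α i)) = ⋂ i, (fun g : ∀ i, α i => g i) ⁻¹' {f i} := by
    ext g; simp [funext_iff]
  rw [this]
  exact MeasurableSet.iInter fun i => measurable_pi_apply i (measurableSet_singleton _)

lemma pi_point {T : Type*} [MeasurableSpace T] [Countable T] [MeasurableSingletonClass T]
    {ι : Type*} [Fintype ι] (j : ι) (huni : ∀ a : ι, a = j)
    (μ : Measure T) [IsProbabilityMeasure μ] (S : Set T) :
    Measure.pi (fun _ : ι => μ) {f | f j ∈ S} = μ S := by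
  have hset : {f : ι → T | f j ∈ S} = Set.pi Set.univ (fun _ => S) := by
    ext f
    simp only [Set.mem_setOf_eq, Set.mem_pi, Set.mem_univ, true_implies]
    exact ⟨fun h a => (huni a) ▸ h, fun h => h j⟩
  rw [hset, Measure.pi_pi, Finset.prod_const, Finset.card_univ,
    Fintype.card_eq_one_iff.2 ⟨j, huni⟩, pow_one]

lemma pi_reindex {T : Type*} [MeasurableSpace T] [Countable T] [MeasurableSingletonClass T]
    {ι ι' : Type*} [Fintype ι] [Fintype ι'] (e : ι' ≃ ι)
    (μ : Measure T) [IsProbabilityMeasure μ] (s : Set (ι → T)) :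
    Measure.pi (fun _ : ι => μ) s
      = Measure.pi (fun _ : ι' => μ) ((fun (g : ι' → T) (l : ι) => g (e.symm l)) ⁻¹' s) := by
  have hmp2 := MeasureTheory.measurePreserving_piCongrLeft (fun _ : ι => μ) e

  rw [← hmp2.measure_preimage (allMeasPi s).nullMeasurableSet]
  congr 1
  ext g
  have hval : ∀ l, (MeasurableEquiv.piCongrLeft (fun _ : ι => T) e g) l = g (e.symm l) := by
    intro l
    rw [MeasurableEquiv.coe_piCongrLeft]
    conv_lhs => rw [show l = e (e.symm l) from (e.apply_symm_apply l).symm]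
    exact Equiv.piCongrLeft_apply_apply (fun _ : ι => T) e g (e.symm l)
  have : (MeasurableEquiv.piCongrLeft (fun _ : ι => T) e) g
      = fun l => g (e.symm l) := funext hval
  simp only [Set.mem_preimage, this]


variable {Ω : Type*} [MeasurableSpace Ω] (ξ : ℕ → ℕ → Ω → ℕ)

/-- `A` is determined by the coordinates in `S`. -/
def Det (S : Finset (ℕ × ℕ)) (A : Set Ω) : Prop :=
  ∀ ω ω', (∀ r ∈ S, ξ r.1 r.2 ω = ξ r.1 r.2 ω') → ω ∈ A → ω' ∈ A

lemma Det.mono {S S' : Finset (ℕ × ℕ)} {A : Set Ω} (h : S ⊆ S') (hd : Det ξ S A) :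
    Det ξ S' A := fun ω ω' hag => hd ω ω' (fun r hr => hag r (h hr))

lemma Det.inter {S : Finset (ℕ × ℕ)} {A B : Set Ω} (hA : Det ξ S A) (hB : Det ξ S B) :
    Det ξ S (A ∩ B) := fun ω ω' hag hω => ⟨hA ω ω' hag hω.1, hB ω ω' hag hω.2⟩

lemma det_indep (P : Measure Ω) [IsProbabilityMeasure P]
    (hmeas : ∀ k j, Measurable (ξ k j))
    (hindep : iIndepFun (fun r : ℕ × ℕ => ξ r.1 r.2) P)
    {S T : Finset (ℕ × ℕ)} (hST : Disjoint S T) {A B : Set Ω}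
    (hA : Det ξ S A) (hB : Det ξ T B) : P (A ∩ B) = P A * P B := by
  have h := hindep.indepFun_finset S T hST (fun r => hmeas r.1 r.2)
  rw [indepFun_iff_measure_inter_preimage_eq_mul] at h
  set fS : Ω → (S → ℕ) := fun ω (r : S) => ξ (r : ℕ × ℕ).1 (r : ℕ × ℕ).2 ω with hfS
  set fT : Ω → (T → ℕ) := fun ω (r : T) => ξ (r : ℕ × ℕ).1 (r : ℕ × ℕ).2 ω with hfT
  have hAeq : A = fS ⁻¹' (fS '' A) := by
    apply Set.Subset.antisymm (Set.subset_preimage_image _ _)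
    rintro ω' ⟨ω, hω, hωω'⟩
    exact hA ω ω' (fun r hr => congrFun hωω' ⟨r, hr⟩) hω
  have hBeq : B = fT ⁻¹' (fT '' B) := by
    apply Set.Subset.antisymm (Set.subset_preimage_image _ _)
    rintro ω' ⟨ω, hω, hωω'⟩
    exact hB ω ω' (fun r hr => congrFun hωω' ⟨r, hr⟩) hω
  rw [hAeq, hBeq]
  exact h _ _ (allMeasPi _) (allMeasPi _)


section ZS


variable {Ω : Type*} [MeasurableSpace Ω] (ξ : ℕ → ℕ → Ω → ℕ) (Z : ℕ → ℕ → Ω → ℕ)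
  (hZ0 : ∀ z ω, Z z 0 ω = z)
  (hZrec : ∀ z k ω, Z z (k + 1) ω = ∑ j ∈ Finset.range (Z z k ω), ξ (k + 1) j ω)

include hZ0 hZrec

lemma Zzero : ∀ k ω, Z 0 k ω = 0 := by
  intro k
  induction k with
  | zero => intro ω; simp [hZ0]
  | succ k ih => intro ω; rw [hZrec, ih ω]; simp

lemma Zmono {z z' : ℕ} (h : z ≤ z') : ∀ k ω, Z z k ω ≤ Z z' k ω := by
  intro k
  induction k with
  | zero => intro ω; simp [hZ0, h]
  | succ k ih =>
    intro ω
    rw [hZrec, hZrec]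
    exact Finset.sum_le_sum_of_subset (Finset.range_subset_range.2 (ih ω))

lemma Ztel (z k : ℕ) (ω : Ω) :
    ∑ i ∈ Finset.range z, (Z (i + 1) k ω - Z i k ω) = Z z k ω := by
  induction z with
  | zero => simp [Zzero ξ Z hZ0 hZrec]
  | succ z ih =>
    rw [Finset.sum_range_succ, ih,
      Nat.add_sub_cancel' (Zmono ξ Z hZ0 hZrec (Nat.le_succ z) k ω)]

lemma Zmeas (hmeas : ∀ k j, Measurable (ξ k j)) (z k : ℕ) : Measurable (Z z k) := by
  induction k with
  | zero =>
    have : Z z 0 = fun _ => z := funext (hZ0 z)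
    rw [this]; exact measurable_const
  | succ k ih =>
    have : Z z (k + 1) = (fun p : ℕ × (ℕ → ℕ) => ∑ j ∈ Finset.range p.1, p.2 j) ∘
        (fun ω => (Z z k ω, fun j => ξ (k + 1) j ω)) := by
      funext ω; simp [hZrec]
    rw [this]
    refine Measurable.comp ?_ (Measurable.prodMk ih
      (measurable_pi_lambda _ (fun j => hmeas (k + 1) j)))
    have : Measurable fun p : (ℕ → ℕ) × ℕ => ∑ j ∈ Finset.range p.2, p.1 j :=
      measurable_from_prod_countable_left (fun m =>
        Finset.measurable_sum (Finset.range m) (fun j _ => measurable_pi_apply j))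
    exact this.comp measurable_swap


end ZS
section AT


variable {Ω : Type*} [MeasurableSpace Ω] (P : Measure Ω) [IsProbabilityMeasure P]
  (q : ℕ → Measure ℕ) (ξ : ℕ → ℕ → Ω → ℕ)

/-- probability that an atom configuration happens -/
lemma atom_prob (hmeas : ∀ k j, Measurable (ξ k j))
    (hindep : iIndepFun (fun r : ℕ × ℕ => ξ r.1 r.2) P)
    (hdist : ∀ k j, P.map (ξ k j) = q k)
    (m u a : ℕ) (φ : Fin a → ℕ) :
    P (⋂ j : Fin a, {ω | ξ m (u + (j : ℕ)) ω = φ j}) = ∏ j : Fin a, q m {φ j} := by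
  classical
  have hinj : Function.Injective (fun j : Fin a => (m, u + (j : ℕ))) := by
    intro j j' h
    simp only [Prod.mk.injEq] at h
    exact Fin.ext (by omega)
  set S : Finset (ℕ × ℕ) := Finset.univ.image (fun j : Fin a => (m, u + (j : ℕ))) with hS
  set sets : ℕ × ℕ → Set ℕ := fun r =>
    if h : r.1 = m ∧ u ≤ r.2 ∧ r.2 - u < a then {φ ⟨r.2 - u, h.2.2⟩} else Set.univ with hsets
  have key := (iIndepFun_iff_measure_inter_preimage_eq_mul.1 hindep) S
    (sets := sets) (fun r _ => by
      by_cases h : r.1 = m ∧ u ≤ r.2 ∧ r.2 - u < a <;>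
        simp [hsets, h, measurableSet_singleton])
  have hset_at : ∀ j : Fin a, sets (m, u + (j : ℕ)) = {φ j} := by
    intro j
    simp only [hsets]
    split
    · apply congrArg (fun x => ({x} : Set ℕ))
      apply congrArg
      exact Fin.ext (show u + (j : ℕ) - u = (j : ℕ) by omega)
    · next h' => exact absurd ⟨trivial, Nat.le_add_right _ _, by have := j.isLt; omega⟩ h'
  have hinter : (⋂ r ∈ S, (fun ω => ξ r.1 r.2 ω) ⁻¹' sets r)
      = ⋂ j : Fin a, {ω | ξ m (u + (j : ℕ)) ω = φ j} := by
    rw [hS]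
    ext ω
    simp only [Set.mem_iInter, Finset.mem_image, Finset.mem_univ, true_and]
    constructor
    · intro h j
      have := h (m, u + (j : ℕ)) ⟨j, rfl⟩
      rw [hset_at j] at this
      exact this
    · rintro h r ⟨j, rfl⟩
      rw [hset_at j]
      exact h j
  rw [hinter] at key
  rw [key, Finset.prod_image (fun j _ j' _ h => hinj h)]
  refine Finset.prod_congr rfl (fun j _ => ?_)
  rw [hset_at j, ← hdist m (u + (j : ℕ)),
    Measure.map_apply (hmeas m (u + (j : ℕ))) (measurableSet_singleton _)]

lemma sum_window_prob (hmeas : ∀ k j, Measurable (ξ k j))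
    (hindep : iIndepFun (fun r : ℕ × ℕ => ξ r.1 r.2) P)
    (hdist : ∀ k j, P.map (ξ k j) = q k)
    (m u a d : ℕ) :
    P {ω | ∑ j ∈ Finset.Ico u (u + a), ξ m j ω = d}
      = ∑' φ : {φ : Fin a → ℕ // ∑ j, φ j = d}, ∏ j : Fin a, q m {(φ : Fin a → ℕ) j} := by
  classical
  have hev : {ω | ∑ j ∈ Finset.Ico u (u + a), ξ m j ω = d}
      = ⋃ φ : {φ : Fin a → ℕ // ∑ j, φ j = d},
          ⋂ j : Fin a, {ω | ξ m (u + (j : ℕ)) ω = (φ : Fin a → ℕ) j} := by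
    ext ω
    simp only [Set.mem_setOf_eq, Set.mem_iUnion, Set.mem_iInter]
    constructor
    · intro h
      refine ⟨⟨fun j => ξ m (u + (j : ℕ)) ω, ?_⟩, fun j => rfl⟩
      rw [Fin.sum_univ_eq_sum_range (fun j => ξ m (u + j) ω)]
      rw [Finset.sum_Ico_eq_sum_range] at h
      simpa using h
    · rintro ⟨⟨φ, hφ⟩, h⟩
      rw [Finset.sum_Ico_eq_sum_range]
      simp only [Nat.add_sub_cancel_left]
      rw [← hφ, ← Fin.sum_univ_eq_sum_range (fun j => ξ m (u + j) ω)]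
      exact Finset.sum_congr rfl (fun j _ => h j)
  rw [hev, measure_iUnion]
  · exact tsum_congr fun φ => atom_prob P q ξ hmeas hindep hdist m u a _
  · rintro ⟨φ, hφ⟩ ⟨φ', hφ'⟩ hne
    have : φ ≠ φ' := fun h => hne (by simpa using h)
    obtain ⟨j, hj⟩ := Function.ne_iff.1 this
    simp only [Set.disjoint_left, Set.mem_iInter, Set.mem_setOf_eq]
    intro ω h1 h2
    exact hj ((h1 j).symm.trans (h2 j))
  · intro φ
    exact MeasurableSet.iInter fun j =>
      (hmeas m (u + (j : ℕ))) (measurableSet_singleton _)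

/-- the law of a window sum only depends on the window length -/
lemma wsum (hmeas : ∀ k j, Measurable (ξ k j))
    (hindep : iIndepFun (fun r : ℕ × ℕ => ξ r.1 r.2) P)
    (hdist : ∀ k j, P.map (ξ k j) = q k)
    (m u a d : ℕ) :
    P {ω | ∑ j ∈ Finset.Ico u (u + a), ξ m j ω = d}
      = P {ω | ∑ j ∈ Finset.range a, ξ m j ω = d} := by
  rw [sum_window_prob P q ξ hmeas hindep hdist m u a d]
  have := sum_window_prob P q ξ hmeas hindep hdist m 0 a d
  rw [Finset.range_eq_Ico]
  simpa using this.symm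


end AT
section MAIN


variable {Ω : Type*} [MeasurableSpace Ω] (ξ : ℕ → ℕ → Ω → ℕ)

def sfun (t : ℕ → ℕ → ℕ) (i k : ℕ) : ℕ := ∑ l ∈ Finset.range i, t l k

lemma sfun_succ (t : ℕ → ℕ → ℕ) (i k : ℕ) : sfun t (i + 1) k = sfun t i k + t i k :=
  Finset.sum_range_succ _ _

lemma sfun_mono (t : ℕ → ℕ → ℕ) {i i' : ℕ} (h : i ≤ i') (k : ℕ) :
    sfun t i k ≤ sfun t i' k :=
  Finset.sum_le_sum_of_subset (Finset.range_subset_range.2 h)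

variable (Z : ℕ → ℕ → Ω → ℕ)

def Eev (z n : ℕ) (t : ℕ → ℕ → ℕ) : Set Ω :=
  {ω | ∀ i ≤ z, ∀ k ≤ n, Z i k ω = sfun t i k}

def Wev (m u a d : ℕ) : Set Ω := {ω | ∑ j ∈ Finset.Ico u (u + a), ξ m j ω = d}

lemma det_W (m u a d : ℕ) :
    Det ξ ({m} ×ˢ Finset.Ico u (u + a)) (Wev ξ m u a d) := by
  intro ω ω' hag hω
  have : ∑ j ∈ Finset.Ico u (u + a), ξ m j ω' = ∑ j ∈ Finset.Ico u (u + a), ξ m j ω :=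
    Finset.sum_congr rfl fun j hj => (hag (m, j) (by simpa using hj)).symm
  exact this.trans hω

def Mb (t : ℕ → ℕ → ℕ) (z n : ℕ) : ℕ := ∑ k ∈ Finset.range n, sfun t z k

lemma Mb_le {t : ℕ → ℕ → ℕ} {z n k : ℕ} (h : k < n) : sfun t z k ≤ Mb t z n :=
  Finset.single_le_sum (fun _ _ => Nat.zero_le _) (Finset.mem_range.2 h)

variable (hZ0 : ∀ z ω, Z z 0 ω = z)
  (hZrec : ∀ z k ω, Z z (k + 1) ω = ∑ j ∈ Finset.range (Z z k ω), ξ (k + 1) j ω)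

include hZ0 hZrec

lemma det_E (z n : ℕ) (t : ℕ → ℕ → ℕ) :
    Det ξ (Finset.Icc 1 n ×ˢ Finset.range (Mb t z n)) (Eev Z z n t) := by
  intro ω ω' hag hω
  have key : ∀ k, k ≤ n → ∀ i, i ≤ z → Z i k ω' = sfun t i k := by
    intro k
    induction k with
    | zero =>
      intro _ i hi
      rw [hZ0, ← hω i hi 0 (Nat.zero_le n), hZ0]
    | succ k ih =>
      intro hk i hi
      have hkn : k ≤ n := Nat.le_of_succ_le hk
      rw [hZrec, ih hkn i hi]
      have hsum : ∑ j ∈ Finset.range (sfun t i k), ξ (k + 1) j ω'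
          = ∑ j ∈ Finset.range (sfun t i k), ξ (k + 1) j ω := by
        refine Finset.sum_congr rfl fun j hj => ?_
        refine (hag (k + 1, j) ?_).symm
        simp only [Finset.mem_product, Finset.mem_Icc, Finset.mem_range]
        refine ⟨⟨Nat.one_le_iff_ne_zero.2 (Nat.succ_ne_zero k), hk⟩, ?_⟩
        have h1 : j < sfun t i k := Finset.mem_range.1 hj
        have h2 : sfun t i k ≤ sfun t z k := sfun_mono t hi k
        exact lt_of_lt_of_le h1 (le_trans h2 (Mb_le (by omega)))
      rw [hsum, ← hω i hi k hkn, ← hZrec]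
      exact hω i hi (k + 1) hk
  exact fun i hi k hk => key k hk i hi

lemma Eev_zero (z : ℕ) (t : ℕ → ℕ → ℕ) :
    Eev Z z 0 t = if ∀ i < z, t i 0 = 1 then Set.univ else (∅ : Set Ω) := by
  have aux : (∀ i < z, t i 0 = 1) → ∀ i, i ≤ z → (i : ℕ) = sfun t i 0 := by
    intro h i
    induction i with
    | zero => intro _; simp [sfun]
    | succ i ih =>
      intro hi
      rw [sfun_succ, ← ih (Nat.le_of_succ_le hi), h i (Nat.lt_of_succ_le hi)]
  have hiff : ∀ ω : Ω, ω ∈ Eev Z z 0 t ↔ (∀ i < z, t i 0 = 1) := by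
    intro ω
    constructor
    · intro h i hi
      have h1 := h i (le_of_lt hi) 0 le_rfl
      have h2 := h (i + 1) hi 0 le_rfl
      rw [hZ0] at h1 h2
      rw [sfun_succ] at h2
      omega
    · intro h i hi k hk
      obtain rfl : k = 0 := Nat.le_zero.1 hk
      rw [hZ0]
      exact aux h i hi
  by_cases hcond : ∀ i < z, t i 0 = 1
  · rw [if_pos hcond]
    ext ω
    simpa using (hiff ω).2 hcond
  · rw [if_neg hcond]
    ext ω
    simp only [Set.mem_empty_iff_false, iff_false]
    exact fun h => hcond ((hiff ω).1 h)

lemma Eev_succ (z n : ℕ) (t : ℕ → ℕ → ℕ) :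
    Eev Z z (n + 1) t = Eev Z z n t ∩
      ⋂ i ∈ Finset.range z, Wev ξ (n + 1) (sfun t i n) (t i n) (t i (n + 1)) := by
  ext ω
  have hsplit : ∀ i, ∑ j ∈ Finset.range (sfun t i n), ξ (n + 1) j ω
      + ∑ j ∈ Finset.Ico (sfun t i n) (sfun t i n + t i n), ξ (n + 1) j ω
      = ∑ j ∈ Finset.range (sfun t (i + 1) n), ξ (n + 1) j ω := by
    intro i
    simp only [Finset.range_eq_Ico, sfun_succ]
    exact Finset.sum_Ico_consecutive _ (Nat.zero_le _) (Nat.le_add_right _ _)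
  simp only [Set.mem_inter_iff, Set.mem_iInter, Finset.mem_range]
  constructor
  · intro h
    have hE : ∀ i ≤ z, ∀ k ≤ n, Z i k ω = sfun t i k :=
      fun i hi k hk => h i hi k (le_trans hk (Nat.le_succ n))
    refine ⟨hE, ?_⟩
    intro i hi
    have hZi : Z i (n + 1) ω = ∑ j ∈ Finset.range (sfun t i n), ξ (n + 1) j ω := by
      rw [hZrec, hE i (le_of_lt hi) n le_rfl]
    have hZi1 : Z (i + 1) (n + 1) ω = ∑ j ∈ Finset.range (sfun t (i + 1) n), ξ (n + 1) j ω := by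
      rw [hZrec, hE (i + 1) hi n le_rfl]
    have e1 : Z i (n + 1) ω = sfun t i (n + 1) := h i (le_of_lt hi) (n + 1) le_rfl
    have e2 : Z (i + 1) (n + 1) ω = sfun t (i + 1) (n + 1) := h (i + 1) hi (n + 1) le_rfl
    have e3 := hsplit i
    have e4 : sfun t (i + 1) (n + 1) = sfun t i (n + 1) + t i (n + 1) := sfun_succ t i (n + 1)
    show ∑ j ∈ Finset.Ico (sfun t i n) (sfun t i n + t i n), ξ (n + 1) j ω = t i (n + 1)
    omega
  · rintro ⟨hE, hW⟩
    have aux : ∀ m, m ≤ z → Z m (n + 1) ω = sfun t m (n + 1) := by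
      intro m
      induction m with
      | zero => intro _; rw [Zzero ξ Z hZ0 hZrec]; simp [sfun]
      | succ m ih =>
        intro hm
        have hmz : m < z := Nat.lt_of_succ_le hm
        have hW' : ∑ j ∈ Finset.Ico (sfun t m n) (sfun t m n + t m n), ξ (n + 1) j ω
            = t m (n + 1) := hW m hmz
        have hZm : Z m (n + 1) ω = ∑ j ∈ Finset.range (sfun t m n), ξ (n + 1) j ω := by
          rw [hZrec, hE m (le_of_lt hmz) n le_rfl]
        have hZm1 : Z (m + 1) (n + 1) ω
            = ∑ j ∈ Finset.range (sfun t (m + 1) n), ξ (n + 1) j ω := by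
          rw [hZrec, hE (m + 1) hm n le_rfl]
        have e3 := hsplit m
        have e4 : sfun t (m + 1) (n + 1) = sfun t m (n + 1) + t m (n + 1) := sfun_succ t m (n + 1)
        have e5 := ih (Nat.le_of_succ_le hm)
        omega
    intro i hi k hk
    by_cases hk' : k ≤ n
    · exact hE i hi k hk'
    · obtain rfl : k = n + 1 := by omega
      exact aux i hi

lemma step_prob (P : Measure Ω) [IsProbabilityMeasure P]
    (hmeas : ∀ k j, Measurable (ξ k j))
    (hindep : iIndepFun (fun r : ℕ × ℕ => ξ r.1 r.2) P)
    (z n : ℕ) (t : ℕ → ℕ → ℕ) (z' : ℕ) :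
    P (Eev Z z n t ∩ ⋂ i ∈ Finset.range z', Wev ξ (n + 1) (sfun t i n) (t i n) (t i (n + 1)))
      = P (Eev Z z n t) *
        ∏ i ∈ Finset.range z', P (Wev ξ (n + 1) (sfun t i n) (t i n) (t i (n + 1))) := by
  induction z' with
  | zero => simp
  | succ z' ih =>
    rw [Finset.range_add_one, Finset.set_biInter_insert,
      Finset.prod_insert (by simp)]
    have hre : Eev Z z n t ∩ (Wev ξ (n + 1) (sfun t z' n) (t z' n) (t z' (n + 1)) ∩
          ⋂ i ∈ Finset.range z', Wev ξ (n + 1) (sfun t i n) (t i n) (t i (n + 1)))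
        = (Eev Z z n t ∩ ⋂ i ∈ Finset.range z', Wev ξ (n + 1) (sfun t i n) (t i n) (t i (n + 1)))
          ∩ Wev ξ (n + 1) (sfun t z' n) (t z' n) (t z' (n + 1)) := by
      ext ω
      constructor
      · rintro ⟨h1, h2, h3⟩; exact ⟨⟨h1, h3⟩, h2⟩
      · rintro ⟨⟨h1, h3⟩, h2⟩; exact ⟨h1, h2, h3⟩
    rw [hre]
    set S : Finset (ℕ × ℕ) := (Finset.Icc 1 n ×ˢ Finset.range (Mb t z n))
      ∪ ({n + 1} ×ˢ Finset.range (sfun t z' n)) with hSdef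
    set T : Finset (ℕ × ℕ) := {n + 1} ×ˢ Finset.Ico (sfun t z' n) (sfun t z' n + t z' n)
      with hTdef
    have hST : Disjoint S T := by
      rw [Finset.disjoint_left]
      rintro ⟨k, j⟩ hS hT
      simp only [hSdef, hTdef, Finset.mem_union, Finset.mem_product, Finset.mem_Icc,
        Finset.mem_range, Finset.mem_singleton, Finset.mem_Ico] at hS hT
      omega
    have hA : Det ξ S (Eev Z z n t ∩
        ⋂ i ∈ Finset.range z', Wev ξ (n + 1) (sfun t i n) (t i n) (t i (n + 1))) := by
      refine Det.inter ξ (Det.mono ξ Finset.subset_union_left (det_E ξ Z hZ0 hZrec z n t)) ?_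
      intro ω ω' hag hω
      simp only [Set.mem_iInter] at hω ⊢
      intro i hi
      have hi' : i < z' := Finset.mem_range.1 hi
      have hsub : {n + 1} ×ˢ Finset.Ico (sfun t i n) (sfun t i n + t i n) ⊆ S := by
        refine Finset.Subset.trans ?_ Finset.subset_union_right
        apply Finset.product_subset_product_right
        intro j hj
        simp only [Finset.mem_Ico] at hj
        simp only [Finset.mem_range]
        have : sfun t i n + t i n = sfun t (i + 1) n := (sfun_succ t i n).symm
        have h2 : sfun t (i + 1) n ≤ sfun t z' n := sfun_mono t hi' n
        omega
      exact Det.mono ξ hsub (det_W ξ (n + 1) (sfun t i n) (t i n) (t i (n + 1))) ω ω' hag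
        (hω i hi)
    have hB : Det ξ T (Wev ξ (n + 1) (sfun t z' n) (t z' n) (t z' (n + 1))) :=
      det_W ξ (n + 1) (sfun t z' n) (t z' n) (t z' (n + 1))
    rw [det_indep ξ P hmeas hindep hST hA hB, ih]
    ring


lemma expl (P : Measure Ω) [IsProbabilityMeasure P] (q : ℕ → Measure ℕ)
    (hmeas : ∀ k j, Measurable (ξ k j))
    (hindep : iIndepFun (fun r : ℕ × ℕ => ξ r.1 r.2) P)
    (hdist : ∀ k j, P.map (ξ k j) = q k)
    (z : ℕ) (t : ℕ → ℕ → ℕ) (n : ℕ) :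
    P (Eev Z z n t) = (if ∀ i < z, t i 0 = 1 then 1 else 0) *
      ∏ k ∈ Finset.range n, ∏ i ∈ Finset.range z,
        P {ω | ∑ j ∈ Finset.range (t i k), ξ (k + 1) j ω = t i (k + 1)} := by
  induction n with
  | zero =>
    rw [Eev_zero ξ Z hZ0 hZrec z t]
    split_ifs <;> simp
  | succ n ih =>
    rw [Eev_succ ξ Z hZ0 hZrec z n t, step_prob ξ Z hZ0 hZrec P hmeas hindep z n t z, ih,
      Finset.prod_range_succ]
    have hw : ∀ i, P (Wev ξ (n + 1) (sfun t i n) (t i n) (t i (n + 1)))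
        = P {ω | ∑ j ∈ Finset.range (t i n), ξ (n + 1) j ω = t i (n + 1)} := fun i =>
      wsum P q ξ hmeas hindep hdist (n + 1) (sfun t i n) (t i n) (t i (n + 1))
    rw [Finset.prod_congr rfl (fun i _ => hw i)]
    ring

lemma one_ev (n : ℕ) (τ : ℕ → ℕ) :
    {ω : Ω | ∀ k ≤ n, Z 1 k ω = τ k} = Eev Z 1 n (fun _ k => τ k) := by
  ext ω
  constructor
  · intro h i hi k hk
    interval_cases i
    · rw [Zzero ξ Z hZ0 hZrec]; simp [sfun]
    · rw [show Z 1 k ω = τ k from h k hk]; simp [sfun]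
  · intro h k hk
    have := h 1 le_rfl k hk
    simpa [sfun] using this

lemma master (P : Measure Ω) [IsProbabilityMeasure P] (q : ℕ → Measure ℕ)
    (hmeas : ∀ k j, Measurable (ξ k j))
    (hindep : iIndepFun (fun r : ℕ × ℕ => ξ r.1 r.2) P)
    (hdist : ∀ k j, P.map (ξ k j) = q k)
    (z n : ℕ) (t : ℕ → ℕ → ℕ) :
    P (Eev Z z n t) = ∏ i ∈ Finset.range z, P {ω | ∀ k ≤ n, Z 1 k ω = t i k} := by
  have h1 : ∀ i, P {ω : Ω | ∀ k ≤ n, Z 1 k ω = t i k}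
      = (if t i 0 = 1 then 1 else 0) * ∏ k ∈ Finset.range n,
          P {ω | ∑ j ∈ Finset.range (t i k), ξ (k + 1) j ω = t i (k + 1)} := by
    intro i
    rw [one_ev ξ Z hZ0 hZrec n (t i),
      expl ξ Z hZ0 hZrec P q hmeas hindep hdist 1 (fun _ k => t i k) n]
    refine congrArg₂ (· * ·) (if_congr (by simp) rfl rfl) ?_
    exact Finset.prod_congr rfl fun k _ => Finset.prod_range_one _
  rw [expl ξ Z hZ0 hZrec P q hmeas hindep hdist z t n,
    Finset.prod_congr rfl (fun i _ => h1 i), Finset.prod_mul_distrib, Finset.prod_boole,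
    Finset.prod_comm]
  exact congrArg₂ (· * ·) (if_congr (by simp) rfl rfl) rfl


lemma full (P : Measure Ω) [IsProbabilityMeasure P] (q : ℕ → Measure ℕ)
    (hmeas : ∀ k j, Measurable (ξ k j))
    (hindep : iIndepFun (fun r : ℕ × ℕ => ξ r.1 r.2) P)
    (hdist : ∀ k j, P.map (ξ k j) = q k)
    (n z' : ℕ) :
    P.map (fun ω (i : Fin z') (k : Fin (n + 1)) =>
        Z ((i : ℕ) + 1) (k : ℕ) ω - Z (i : ℕ) (k : ℕ) ω)
      = Measure.pi (fun _ : Fin z' => P.map (fun ω (k : Fin (n + 1)) => Z 1 (k : ℕ) ω)) := by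
  classical
  have hZm : ∀ z k, Measurable (Z z k) := fun z k => Zmeas ξ Z hZ0 hZrec hmeas z k
  have hΨ : Measurable (fun ω (i : Fin z') (k : Fin (n + 1)) =>
      Z ((i : ℕ) + 1) (k : ℕ) ω - Z (i : ℕ) (k : ℕ) ω) :=
    measurable_pi_lambda _ fun i => measurable_pi_lambda _ fun k => (hZm _ _).sub (hZm _ _)
  have hν : Measurable (fun ω (k : Fin (n + 1)) => Z 1 (k : ℕ) ω) :=
    measurable_pi_lambda _ fun k => hZm _ _
  refine MeasureTheory.Measure.ext_of_singleton fun x => ?_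
  set t : ℕ → ℕ → ℕ := fun i k =>
    if h : i < z' ∧ k < n + 1 then x ⟨i, h.1⟩ ⟨k, h.2⟩ else 0 with ht
  have htval : ∀ (i : Fin z') (k : Fin (n + 1)), t (i : ℕ) (k : ℕ) = x i k := by
    intro i k
    have hik : ((i : ℕ) < z' ∧ (k : ℕ) < n + 1) := ⟨i.isLt, k.isLt⟩
    simp only [ht]
    rw [dif_pos hik]
  have hpre : (fun ω (i : Fin z') (k : Fin (n + 1)) =>
      Z ((i : ℕ) + 1) (k : ℕ) ω - Z (i : ℕ) (k : ℕ) ω) ⁻¹' {x} = Eev Z z' n t := by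
    ext ω
    simp only [Set.mem_preimage, Set.mem_singleton_iff, funext_iff]
    constructor
    · intro h i hi k hk
      show Z i k ω = sfun t i k
      rw [← Ztel ξ Z hZ0 hZrec i k ω]
      refine Finset.sum_congr rfl fun l hl => ?_
      have hl' : l < z' := lt_of_lt_of_le (Finset.mem_range.1 hl) hi
      have hx := h ⟨l, hl'⟩ ⟨k, Nat.lt_succ_of_le hk⟩
      exact hx.trans (htval ⟨l, hl'⟩ ⟨k, Nat.lt_succ_of_le hk⟩).symm
    · intro h i k
      have hk : (k : ℕ) ≤ n := Nat.lt_succ_iff.1 k.isLt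
      have h1 : Z ((i : ℕ) + 1) (k : ℕ) ω = sfun t ((i : ℕ) + 1) (k : ℕ) :=
        h ((i : ℕ) + 1) (Nat.succ_le_of_lt i.isLt) (k : ℕ) hk
      have h2 : Z (i : ℕ) (k : ℕ) ω = sfun t (i : ℕ) (k : ℕ) :=
        h (i : ℕ) (le_of_lt i.isLt) (k : ℕ) hk
      rw [h1, h2, sfun_succ, Nat.add_sub_cancel_left, htval]
  rw [Measure.map_apply hΨ (measurableSet_singleton x), hpre,
    master ξ Z hZ0 hZrec P q hmeas hindep hdist z' n t]
  have hsingle : ({x} : Set (Fin z' → Fin (n + 1) → ℕ))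
      = Set.pi Set.univ (fun i => {x i}) := by
    ext y
    simp [funext_iff, Set.mem_pi]
  rw [hsingle, Measure.pi_pi]
  have hfac : ∀ i : Fin z',
      (P.map (fun ω (k : Fin (n + 1)) => Z 1 (k : ℕ) ω)) {x i}
        = P {ω | ∀ k ≤ n, Z 1 k ω = t (i : ℕ) k} := by
    intro i
    rw [Measure.map_apply hν (measurableSet_singleton (x i))]
    congr 1
    ext ω
    simp only [Set.mem_preimage, Set.mem_singleton_iff, funext_iff, Set.mem_setOf_eq]
    constructor
    · intro h k hk
      exact (h ⟨k, Nat.lt_succ_of_le hk⟩ : _).trans (htval i ⟨k, Nat.lt_succ_of_le hk⟩).symm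
    · intro h k
      exact (h (k : ℕ) (Nat.lt_succ_iff.1 k.isLt) : _).trans (htval i k)
  rw [Finset.prod_congr rfl (fun i _ => hfac i)]
  exact (Fin.prod_univ_eq_prod_range (fun i => P {ω | ∀ k ≤ n, Z 1 k ω = t i k}) z').symm


end MAIN
end St16

open St16

/-- Let `(Z_n)` be a branching process in the varying environment
`(q_1, q_2, …)`, with `P_z` the law under the initial condition `Z_0 = z`. Then for all integers
`z ≥ 1`, `0 ≤ v ≤ n` and every `c > 0`,
`P_z(Z_v > cz, Z_n > 0) ≤ z·P_1(Z_v > c, Z_n > 0) + z·P_1(Z_n > 0)·P_{z-1}(Z_v > (z-1)c)`.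
Here `Z z` denotes the process with `Z z 0 = z`, driven by offspring variables
`ξ_{k,j} ∼ q_k`, independent over `(k,j)`. -/
theorem statement16
    {Ω : Type*} [MeasurableSpace Ω] (P : Measure Ω) [IsProbabilityMeasure P]
    (q : ℕ → Measure ℕ) [∀ i, IsProbabilityMeasure (q i)]
    (ξ : ℕ → ℕ → Ω → ℕ) (hmeas : ∀ k j, Measurable (ξ k j))
    (hindep : iIndepFun (fun r : ℕ × ℕ => ξ r.1 r.2) P)
    (hdist : ∀ k j, P.map (ξ k j) = q k)
    (Z : ℕ → ℕ → Ω → ℕ)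
    (hZ0 : ∀ z ω, Z z 0 ω = z)
    (hZrec : ∀ z k ω, Z z (k + 1) ω = ∑ j ∈ Finset.range (Z z k ω), ξ (k + 1) j ω)
    (z v n : ℕ) (hz : 1 ≤ z) (hvn : v ≤ n)
    (c : ℝ) (hc : 0 < c) :
    P {ω | c * z < (Z z v ω : ℝ) ∧ 0 < Z z n ω}
      ≤ z * P {ω | c < (Z 1 v ω : ℝ) ∧ 0 < Z 1 n ω}
        + z * P {ω | 0 < Z 1 n ω} *
            P {ω | ((z : ℝ) - 1) * c < (Z (z - 1) v ω : ℝ)} := by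
  classical
  have hZm : ∀ z k, Measurable (Z z k) := fun z k => Zmeas ξ Z hZ0 hZrec hmeas z k
  set ν : Measure (Fin (n + 1) → ℕ) := P.map (fun ω (k : Fin (n + 1)) => Z 1 (k : ℕ) ω) with hνdef
  have hνmeas : Measurable (fun ω (k : Fin (n + 1)) => Z 1 (k : ℕ) ω) :=
    measurable_pi_lambda _ fun k => hZm _ _
  haveI hνprob : IsProbabilityMeasure ν := Measure.isProbabilityMeasure_map hνmeas.aemeasurable
  set v' : Fin (n + 1) := ⟨v, Nat.lt_succ_of_le hvn⟩ with hv'def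
  set n' : Fin (n + 1) := ⟨n, Nat.lt_succ_self n⟩ with hn'def
  have hfull := full ξ Z hZ0 hZrec P q hmeas hindep hdist n z
  have hfull' := full ξ Z hZ0 hZrec P q hmeas hindep hdist n (z - 1)
  rw [← hνdef] at hfull hfull'
  have hΨz : ∀ m : ℕ, Measurable (fun ω (i : Fin m) (k : Fin (n + 1)) =>
      Z ((i : ℕ) + 1) (k : ℕ) ω - Z (i : ℕ) (k : ℕ) ω) := fun m =>
    measurable_pi_lambda _ fun i => measurable_pi_lambda _ fun k => (hZm _ _).sub (hZm _ _)
  have hsum : ∀ (m : ℕ) (k : ℕ) (ω : Ω),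
      (∑ i : Fin m, (Z ((i : ℕ) + 1) k ω - Z (i : ℕ) k ω)) = Z m k ω := by
    intro m k ω
    rw [Fin.sum_univ_eq_sum_range (fun i => Z (i + 1) k ω - Z i k ω) m]
    exact Ztel ξ Z hZ0 hZrec m k ω
  set Bz : Set (Fin z → Fin (n + 1) → ℕ) :=
    {x | c * z < ((∑ i, x i v' : ℕ) : ℝ) ∧ 0 < ∑ i, x i n'} with hBzdef
  set A1 : Set (Fin (n + 1) → ℕ) := {y | c < ((y v' : ℕ) : ℝ) ∧ 0 < y n'} with hA1def
  set S1 : Set (Fin (n + 1) → ℕ) := {y | 0 < y n'} with hS1def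
  set B' : Set (Fin (z - 1) → Fin (n + 1) → ℕ) :=
    {g | ((z : ℝ) - 1) * c < ((∑ j, g j v' : ℕ) : ℝ)} with hB'def
  -- step 1 : LHS probability as a product-measure probability
  have h1 : P {ω | c * z < (Z z v ω : ℝ) ∧ 0 < Z z n ω}
      = Measure.pi (fun _ : Fin z => ν) Bz := by
    rw [← hfull, Measure.map_apply (hΨz z) (allMeasPi _)]
    congr 1
    ext ω
    simp only [Set.mem_preimage, hBzdef, Set.mem_setOf_eq, hsum]
    exact Iff.rfl
  -- step 2 : event inclusion
  set Ai : Fin z → Set (Fin z → Fin (n + 1) → ℕ) :=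
    fun i => {x | c < ((x i v' : ℕ) : ℝ) ∧ 0 < x i n'} with hAidef
  set Ci : Fin z → Set (Fin z → Fin (n + 1) → ℕ) :=
    fun i => {x | 0 < x i n' ∧
      ((z : ℝ) - 1) * c < ((∑ l : {l : Fin z // ¬ l = i}, x (l : Fin z) v' : ℕ) : ℝ)} with hCidef
  have hincl : Bz ⊆ ⋃ i : Fin z, (Ai i ∪ Ci i) := by
    rintro x ⟨hx1, hx2⟩
    have hxne : ∑ i : Fin z, x i n' ≠ 0 := Nat.pos_iff_ne_zero.1 hx2
    obtain ⟨i, -, hi⟩ := Finset.exists_ne_zero_of_sum_ne_zero hxne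
    refine Set.mem_iUnion.2 ⟨i, ?_⟩
    by_cases hvc : c < ((x i v' : ℕ) : ℝ)
    · exact Or.inl ⟨hvc, Nat.pos_of_ne_zero hi⟩
    · refine Or.inr ⟨Nat.pos_of_ne_zero hi, ?_⟩
      push_neg at hvc
      have hsplit : (∑ l : Fin z, x l v')
          = x i v' + ∑ l ∈ Finset.univ.erase i, x l v' :=
        (Finset.add_sum_erase _ _ (Finset.mem_univ i)).symm
      have hsub : (∑ l : {l : Fin z // ¬ l = i}, x (l : Fin z) v')
          = ∑ l ∈ Finset.univ.erase i, x l v' :=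
        (Finset.sum_subtype (Finset.univ.erase i)
          (fun l => by simp [Finset.mem_erase]) (fun l => x l v')).symm
      have hcast : ((∑ l : {l : Fin z // ¬ l = i}, x (l : Fin z) v' : ℕ) : ℝ)
          = ((∑ l : Fin z, x l v' : ℕ) : ℝ) - ((x i v' : ℕ) : ℝ) := by
        rw [hsub, hsplit]; push_cast; ring
      rw [hcast]
      have hz1 : (1 : ℝ) ≤ (z : ℝ) := by exact_mod_cast hz
      nlinarith [hx1, hvc]
  -- step 3 : the measures of the pieces
  have hAi : ∀ i, Measure.pi (fun _ : Fin z => ν) (Ai i) = ν A1 := by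
    intro i
    have hset : Ai i = Set.pi Set.univ (fun l => if l = i then A1 else Set.univ) := by
      ext x
      simp only [hAidef, Set.mem_setOf_eq, Set.mem_pi, Set.mem_univ, true_implies]
      constructor
      · intro hx l
        by_cases hl : l = i
        · subst hl; rw [if_pos rfl]; exact hx
        · rw [if_neg hl]; trivial
      · intro hx
        have := hx i
        rwa [if_pos rfl] at this
    rw [hset, Measure.pi_pi]
    have hval : ∀ l : Fin z, ν (if l = i then A1 else Set.univ) = if l = i then ν A1 else 1 := by
      intro l; split_ifs <;> simp
    rw [Finset.prod_congr rfl (fun l _ => hval l)]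
    rw [Finset.prod_ite_eq' Finset.univ i (fun _ => ν A1), if_pos (Finset.mem_univ i)]
  have hCi : ∀ i, Measure.pi (fun _ : Fin z => ν) (Ci i)
      = ν S1 * Measure.pi (fun _ : Fin (z - 1) => ν) B' := by
    intro i
    have hmp := MeasureTheory.measurePreserving_piEquivPiSubtypeProd
      (fun _ : Fin z => ν) (fun l => l = i)
    set s1 : Set ({l : Fin z // l = i} → Fin (n + 1) → ℕ) := {f | 0 < f ⟨i, rfl⟩ n'} with hs1def
    set s2 : Set ({l : Fin z // ¬ l = i} → Fin (n + 1) → ℕ) :=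
      {g | ((z : ℝ) - 1) * c < ((∑ l, g l v' : ℕ) : ℝ)} with hs2def
    have hCeq : Ci i = (MeasurableEquiv.piEquivPiSubtypeProd
        (fun _ : Fin z => Fin (n + 1) → ℕ) (fun l => l = i)) ⁻¹' (s1 ×ˢ s2) := by
      ext x
      exact Iff.rfl
    rw [hCeq, hmp.measure_preimage ((allMeasPi s1).prod (allMeasPi s2)).nullMeasurableSet,
      Measure.prod_prod]
    congr 1
    · -- first factor
      exact @pi_point (Fin (n + 1) → ℕ) _ _ _ {l : Fin z // l = i} (Subtype.fintype _)
        ⟨i, rfl⟩ (fun a => Subtype.ext a.2) ν _ S1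
    · -- second factor
      have hcard : Fintype.card {l : Fin z // ¬ l = i} = z - 1 := by
        rw [Fintype.card_subtype_compl, Fintype.card_fin]
        congr 1
      set e2 : Fin (z - 1) ≃ {l : Fin z // ¬ l = i} := (Fintype.equivFinOfCardEq hcard).symm
        with he2def
      rw [pi_reindex e2 ν s2]
      congr 1
      ext g
      simp only [Set.mem_preimage, hs2def, hB'def, Set.mem_setOf_eq]
      rw [show (∑ l : {l : Fin z // ¬ l = i}, g (e2.symm l) v')
          = ∑ j : Fin (z - 1), g j v' from Equiv.sum_comp e2.symm (fun j => g j v')]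
  -- step 4 : identify the factors with P-probabilities
  have hA1P : ν A1 = P {ω | c < (Z 1 v ω : ℝ) ∧ 0 < Z 1 n ω} := by
    rw [hνdef, Measure.map_apply hνmeas (allMeasPi _)]
    congr 1
  have hS1P : ν S1 = P {ω | 0 < Z 1 n ω} := by
    rw [hνdef, Measure.map_apply hνmeas (allMeasPi _)]
    congr 1
  have hB'P : Measure.pi (fun _ : Fin (z - 1) => ν) B'
      = P {ω | ((z : ℝ) - 1) * c < (Z (z - 1) v ω : ℝ)} := by
    rw [← hfull', Measure.map_apply (hΨz (z - 1)) (allMeasPi _)]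
    congr 1
    ext ω
    simp only [Set.mem_preimage, hB'def, Set.mem_setOf_eq, hsum]
    exact Iff.rfl
  -- step 5 : assemble
  rw [h1, ← hA1P, ← hS1P, ← hB'P]
  calc Measure.pi (fun _ : Fin z => ν) Bz
      ≤ Measure.pi (fun _ : Fin z => ν) (⋃ i : Fin z, (Ai i ∪ Ci i)) := measure_mono hincl
    _ ≤ ∑' i : Fin z, Measure.pi (fun _ : Fin z => ν) (Ai i ∪ Ci i) := measure_iUnion_le _
    _ ≤ ∑' i : Fin z, (ν A1 + ν S1 * Measure.pi (fun _ : Fin (z - 1) => ν) B') := by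
        refine ENNReal.tsum_le_tsum fun i => ?_
        refine (measure_union_le _ _).trans ?_
        rw [hAi i, hCi i]
    _ = z * (ν A1 + ν S1 * Measure.pi (fun _ : Fin (z - 1) => ν) B') := by
        rw [tsum_fintype, Finset.sum_const, Finset.card_univ, Fintype.card_fin, nsmul_eq_mul]
    _ = z * ν A1 + z * ν S1 * Measure.pi (fun _ : Fin (z - 1) => ν) B' := by
        rw [mul_add, mul_assoc]
end
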